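/- Let (X,T) be a minimal distal system and d ≥ 1. If x, y ∈ Q^[d+1](X) agree in all coordinates ε ≠ ∅, then (x_∅, y_∅) ∈ RP^[d](X). -/

import Mathlib

open Filter Topology

noncomputable section

def dotP {d : ℕ} (n : Fin d → ℤ) (ε : Fin d → Bool) : ℤ :=
  ∑ i, if ε i then n i else 0

def vertex0 (d : ℕ) : Fin d → Bool := fun _ => false

def cubeQ (X : Type*) [TopologicalSpace X] (T : X ≃ₜ X) (d : ℕ) :
    Set ((Fin d → Bool) → X) :=
  closure {y | ∃ (x : X) (n : Fin d → ℤ), y = fun ε => (T.toEquiv ^ dotP n ε) x}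

set_option linter.unusedSectionVars false
set_option linter.unusedVariables false
set_option linter.unreachableTactic false
set_option linter.unusedTactic false
set_option linter.unnecessarySeqFocus false

namespace RPaux

variable {X : Type*} [MetricSpace X] [CompactSpace X] (T : X ≃ₜ X)

lemma contPow (n : ℤ) : Continuous fun x : X => (T.toEquiv ^ n) x := by
  induction n using Int.induction_on with
  | zero => simpa using continuous_id'
  | succ i ih =>
      have h : ∀ x : X, (T.toEquiv ^ ((i : ℤ) + 1)) x = (T.toEquiv ^ (i : ℤ)) (T x) := by
        intro x; rw [zpow_add, zpow_one, Equiv.Perm.mul_apply]; rfl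
      simp only [h]; exact ih.comp T.continuous
  | pred i ih =>
      have h : ∀ x : X, (T.toEquiv ^ (-(i : ℤ) - 1)) x = (T.toEquiv ^ (-(i : ℤ))) (T.symm x) := by
        intro x; rw [sub_eq_add_neg, zpow_add, zpow_neg_one, Equiv.Perm.mul_apply]
        congr 1
      simp only [h]; exact ih.comp T.symm.continuous

lemma pow_add_apply (a b : ℤ) (x : X) :
    (T.toEquiv ^ (a + b)) x = (T.toEquiv ^ a) ((T.toEquiv ^ b) x) := by
  rw [zpow_add, Equiv.Perm.mul_apply]

variable (k : ℕ)

/-- The acting "face + diagonal" group of the `k`-cube. -/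
def Gset : Set (((Fin k → Bool) → X) → ((Fin k → Bool) → X)) :=
  {f | ∃ (N : Fin k → ℤ) (m : ℤ), f = fun z ε => (T.toEquiv ^ (dotP N ε + m)) (z ε)}

/-- The enveloping semigroup. -/
def Eset : Set (((Fin k → Bool) → X) → ((Fin k → Bool) → X)) := closure (Gset T k)

variable {T k}

lemma id_mem_G : (fun z => z) ∈ Gset T k := by
  refine ⟨fun _ => 0, 0, ?_⟩
  funext z ε
  simp [dotP]

lemma G_continuous {f} (hf : f ∈ Gset T k) : Continuous f := by
  obtain ⟨N, m, rfl⟩ := hf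
  exact continuous_pi fun ε => (contPow T _).comp (continuous_apply ε)

lemma cont_comp_right (q : ((Fin k → Bool) → X) → ((Fin k → Bool) → X)) :
    Continuous fun p : ((Fin k → Bool) → X) → ((Fin k → Bool) → X) => p ∘ q :=
  continuous_pi fun z => continuous_apply (q z)

lemma cont_comp_left {g : ((Fin k → Bool) → X) → ((Fin k → Bool) → X)} (hg : Continuous g) :
    Continuous fun p : ((Fin k → Bool) → X) → ((Fin k → Bool) → X) => g ∘ p :=
  continuous_pi fun z => hg.comp (continuous_apply z)

lemma G_mul {f g} (hf : f ∈ Gset T k) (hg : g ∈ Gset T k) : f ∘ g ∈ Gset T k := by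
  obtain ⟨N, m, rfl⟩ := hf
  obtain ⟨N', m', rfl⟩ := hg
  refine ⟨N + N', m + m', ?_⟩
  funext z ε
  show (T.toEquiv ^ (dotP N ε + m)) ((T.toEquiv ^ (dotP N' ε + m')) (z ε)) = _
  rw [← pow_add_apply]
  congr 1
  have : dotP (N + N') ε = dotP N ε + dotP N' ε := by
    simp [dotP, Finset.sum_add_distrib, ← Finset.sum_add_distrib]
    congr 1; funext i; split <;> simp
  rw [this]; ring_nf

lemma E_mul {p q} (hp : p ∈ Eset T k) (hq : q ∈ Eset T k) : p ∘ q ∈ Eset T k := by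
  have step1 : ∀ g ∈ Gset T k, g ∘ q ∈ Eset T k := by
    intro g hg
    have hsub : (fun p => g ∘ p) '' Gset T k ⊆ Gset T k := by
      rintro - ⟨h, hh, rfl⟩; exact G_mul hg hh
    have h2 := (image_closure_subset_closure_image (cont_comp_left (G_continuous hg)))
      (Set.mem_image_of_mem _ hq)
    exact closure_mono hsub h2
  have hsub2 : (fun p => p ∘ q) '' Gset T k ⊆ Eset T k := by
    rintro - ⟨g, hg, rfl⟩; exact step1 g hg
  have h2 := (image_closure_subset_closure_image (cont_comp_right q))
    (Set.mem_image_of_mem _ hp)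
  have h3 := closure_mono hsub2 h2
  rw [Eset] at h3 ⊢
  rwa [closure_closure] at h3

/-- coordinates of `p z` depend only on the corresponding coordinate of `z`. -/
lemma E_coord {p} (hp : p ∈ Eset T k) {z z' : (Fin k → Bool) → X} {i : Fin k → Bool}
    (h : z i = z' i) : p z i = p z' i := by
  have hcl : IsClosed {f : ((Fin k → Bool) → X) → ((Fin k → Bool) → X) | f z i = f z' i} :=
    isClosed_eq ((continuous_apply i).comp (continuous_apply z))
      ((continuous_apply i).comp (continuous_apply z'))
  refine closure_minimal ?_ hcl hp
  rintro - ⟨N, m, rfl⟩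
  simp [h]


/-- In a distal system every idempotent of the enveloping semigroup is the identity. -/
lemma E_idem_id
    (hdistal : ∀ x y : X, x ≠ y →
      ∃ δ > 0, ∀ n : ℤ, δ ≤ dist ((T.toEquiv ^ n) x) ((T.toEquiv ^ n) y))
    {e} (he : e ∈ Eset T k) (hee : e ∘ e = e) : e = fun z => z := by
  funext z i
  by_contra hne
  obtain ⟨δ, hδ, hb⟩ := hdistal (z i) (e z i) (fun h => hne h.symm)
  have c1 : Continuous fun f : ((Fin k → Bool) → X) → ((Fin k → Bool) → X) =>
      dist (f z i) (e z i) :=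
    ((continuous_apply i).comp (continuous_apply z)).dist continuous_const
  have c2 : Continuous fun f : ((Fin k → Bool) → X) → ((Fin k → Bool) → X) =>
      dist (f (e z) i) (e z i) :=
    ((continuous_apply i).comp (continuous_apply (e z))).dist continuous_const
  have hUopen : IsOpen {f : ((Fin k → Bool) → X) → ((Fin k → Bool) → X) |
      dist (f z i) (e z i) < δ / 2 ∧ dist (f (e z) i) (e z i) < δ / 2} :=
    (isOpen_lt c1 continuous_const).inter (isOpen_lt c2 continuous_const)
  have heU : e ∈ {f : ((Fin k → Bool) → X) → ((Fin k → Bool) → X) |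
      dist (f z i) (e z i) < δ / 2 ∧ dist (f (e z) i) (e z i) < δ / 2} := by
    have h1 : e (e z) = e z := congrFun hee z
    constructor <;> simp [h1] <;> positivity
  obtain ⟨g, hgU, hgG⟩ := _root_.mem_closure_iff.1 he _ hUopen heU
  obtain ⟨N, m, rfl⟩ := hgG
  have e1 : dist ((T.toEquiv ^ (dotP N i + m)) (z i)) (e z i) < δ / 2 := hgU.1
  have e2 : dist ((T.toEquiv ^ (dotP N i + m)) (e z i)) (e z i) < δ / 2 := hgU.2
  have tri := dist_triangle ((T.toEquiv ^ (dotP N i + m)) (z i)) (e z i)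
    ((T.toEquiv ^ (dotP N i + m)) (e z i))
  have hcm : dist (e z i) ((T.toEquiv ^ (dotP N i + m)) (e z i))
      = dist ((T.toEquiv ^ (dotP N i + m)) (e z i)) (e z i) := dist_comm _ _
  have := hb (dotP N i + m)
  linarith

lemma E_compact : IsCompact (Eset T k) := isClosed_closure.isCompact

lemma id_mem_E : (fun z : (Fin k → Bool) → X => z) ∈ Eset T k := subset_closure id_mem_G

/-- In a minimal distal system the enveloping semigroup is a group. -/
lemma E_inv
    (hdistal : ∀ x y : X, x ≠ y →
      ∃ δ > 0, ∀ n : ℤ, δ ≤ dist ((T.toEquiv ^ n) x) ((T.toEquiv ^ n) y))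
    {p} (hp : p ∈ Eset T k) :
    ∃ q ∈ Eset T k, q ∘ p = (fun z => z) ∧ p ∘ q = (fun z => z) := by
  letI : Semigroup (((Fin k → Bool) → X) → ((Fin k → Bool) → X)) :=
    { mul := fun f g => f ∘ g
      mul_assoc := fun _ _ _ => rfl }
  have hmul : ∀ f g : ((Fin k → Bool) → X) → ((Fin k → Bool) → X), f * g = f ∘ g :=
    fun _ _ => rfl
  have hcontmul : ∀ r : ((Fin k → Bool) → X) → ((Fin k → Bool) → X),
      Continuous (· * r) := fun r => cont_comp_right r
  have key : ∀ p' ∈ Eset T k, ∃ q ∈ Eset T k, q ∘ p' = (fun z => z) := by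
    intro p' hp'
    set s : Set (((Fin k → Bool) → X) → ((Fin k → Bool) → X)) :=
      (fun f => f ∘ p') '' Eset T k with hs
    have hsE : s ⊆ Eset T k := by
      rintro - ⟨f, hf, rfl⟩; exact E_mul hf hp'
    have hcomp : IsCompact s := E_compact.image (cont_comp_right p')
    have hne : s.Nonempty := ⟨(fun z => z) ∘ p', Set.mem_image_of_mem _ id_mem_E⟩
    have hclosed : ∀ x ∈ s, ∀ y ∈ s, x * y ∈ s := by
      rintro x hx y hy
      obtain ⟨f, hf, rfl⟩ := hx
      obtain ⟨g, hg, rfl⟩ := hy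
      rw [hmul]
      refine ⟨(f ∘ p') ∘ g, E_mul (E_mul hf hp') hg, rfl⟩
    obtain ⟨m, hms, hmm⟩ := exists_idempotent_in_compact_subsemigroup hcontmul s hne hcomp hclosed
    have hmE : m ∈ Eset T k := hsE hms
    have hmid : m = fun z => z := E_idem_id hdistal hmE hmm
    obtain ⟨q, hq, hqp⟩ := hms
    have hqp' : q ∘ p' = m := hqp
    exact ⟨q, hq, by rw [hqp', hmid]⟩
  obtain ⟨q, hq, hqp⟩ := key p hp
  obtain ⟨r, hr, hrq⟩ := key q hq
  refine ⟨q, hq, hqp, ?_⟩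
  funext z
  have h1 : q (p (q z)) = q z := congrFun hqp (q z)
  calc p (q z) = r (q (p (q z))) := (congrFun hrq (p (q z))).symm
    _ = r (q z) := by rw [h1]
    _ = z := congrFun hrq z

lemma E_diag_mem_cubeQ {x₀ : X} {p} (hp : p ∈ Eset T k) :
    p (fun _ => x₀) ∈ cubeQ X T k := by
  have hev : Continuous fun f : ((Fin k → Bool) → X) → ((Fin k → Bool) → X) =>
      f (fun _ => x₀) := continuous_apply _
  have h2 := image_closure_subset_closure_image hev (Set.mem_image_of_mem _ hp)
  refine closure_mono ?_ h2
  rintro - ⟨g, ⟨N, m, rfl⟩, rfl⟩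
  refine ⟨(T.toEquiv ^ m) x₀, N, ?_⟩
  funext ε
  exact pow_add_apply T _ _ _

lemma cubeQ_eq_E_diag
    (hmin : ∀ x : X, Dense (Set.range fun n : ℤ => (T.toEquiv ^ n) x))
    (x₀ : X) {w} (hw : w ∈ cubeQ X T k) :
    ∃ p ∈ Eset T k, w = p (fun _ => x₀) := by
  set A := (fun p : ((Fin k → Bool) → X) → ((Fin k → Bool) → X) => p (fun _ => x₀)) ''
    Eset T k with hA
  have hAclosed : IsClosed A := (E_compact.image (continuous_apply _)).isClosed
  suffices h : cubeQ X T k ⊆ A by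
    obtain ⟨p, hp, hpw⟩ := h hw
    exact ⟨p, hp, hpw.symm⟩
  refine closure_minimal ?_ hAclosed
  rintro - ⟨x, n, rfl⟩
  have hx : x ∈ closure (Set.range fun m : ℤ => (T.toEquiv ^ m) x₀) := hmin x₀ x
  have hcont : Continuous fun y : X => (fun ε => (T.toEquiv ^ dotP n ε) y) :=
    continuous_pi fun ε => contPow T _
  have h2 := image_closure_subset_closure_image hcont (Set.mem_image_of_mem _ hx)
  refine closure_minimal ?_ hAclosed h2
  rintro - ⟨-, ⟨m, rfl⟩, rfl⟩
  refine ⟨fun z ε => (T.toEquiv ^ (dotP n ε + m)) (z ε), subset_closure ⟨n, m, rfl⟩, ?_⟩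
  funext ε
  exact pow_add_apply T _ _ _

lemma cubeQ_comp {A B : ℕ} (φ : (Fin A → Bool) → (Fin B → Bool))
    (h : ∀ n : Fin B → ℤ, ∃ (n' : Fin A → ℤ) (a : ℤ), ∀ ε, dotP n (φ ε) = dotP n' ε + a)
    {z} (hz : z ∈ cubeQ X T B) : (fun ε => z (φ ε)) ∈ cubeQ X T A := by
  have hcont : Continuous fun w : (Fin B → Bool) → X => (fun ε => w (φ ε)) :=
    continuous_pi fun ε => continuous_apply (φ ε)
  have h2 := image_closure_subset_closure_image hcont (Set.mem_image_of_mem _ hz)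
  refine closure_mono ?_ h2
  rintro - ⟨-, ⟨x, n, rfl⟩, rfl⟩
  obtain ⟨n', a, hna⟩ := h n
  refine ⟨(T.toEquiv ^ a) x, n', ?_⟩
  funext ε
  show (T.toEquiv ^ dotP n (φ ε)) x = _
  rw [hna ε, pow_add_apply]

lemma dotP_decomp {k : ℕ} (n : Fin (k + 1) → ℤ) (ε : Fin (k + 1) → Bool) :
    dotP n ε = dotP (Fin.init n) (Fin.init ε)
      + (if ε (Fin.last k) then n (Fin.last k) else 0) := by
  unfold dotP
  rw [Fin.sum_univ_castSucc]
  rfl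

lemma dotP_boolsnoc {k : ℕ} (n : Fin (k + 1) → ℤ) (β : Fin k → Bool) (c : Bool) :
    dotP n (Fin.snoc β c) = dotP (Fin.init n) β + (if c then n (Fin.last k) else 0) := by
  rw [dotP_decomp]
  simp [Fin.init_snoc]

lemma dotP_intsnoc {k : ℕ} (n : Fin k → ℤ) (c : ℤ) (ε : Fin (k + 1) → Bool) :
    dotP (Fin.snoc n c) ε = dotP n (Fin.init ε) + (if ε (Fin.last k) then c else 0) := by
  rw [dotP_decomp]
  simp

lemma dotP_vertex0 {k : ℕ} (n : Fin k → ℤ) : dotP n (vertex0 k) = 0 := by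
  simp [dotP, vertex0]

end RPaux

/-- The regionally proximal relation of order `d`. -/
def RP (X : Type*) [MetricSpace X] (T : X ≃ₜ X) (d : ℕ) : Set (X × X) :=
  {p | ∀ δ > 0, ∃ (x' y' : X) (n : Fin d → ℤ),
    dist p.1 x' < δ ∧ dist p.2 y' < δ ∧
    ∀ ε : Fin d → Bool, ε ≠ vertex0 d →
      dist ((T.toEquiv ^ dotP n ε) x') ((T.toEquiv ^ dotP n ε) y') < δ}

/-- The point of `X^{2^{d+1}}` with value `a` at the vertex `∅` and given by `b`
elsewhere. -/
def set0 {X : Type*} {d : ℕ} (a : X) (b : (Fin d → Bool) → X) : (Fin d → Bool) → X :=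
  fun ε => if ε = vertex0 d then a else b ε

open RPaux in
/-- In a minimal distal system, two parallelepipeds agreeing in all coordinates
`ε ≠ ∅` have regionally proximal first coordinates. -/
theorem RP_of_cubeQ_agree
    {X : Type*} [MetricSpace X] [CompactSpace X] (T : X ≃ₜ X) (d : ℕ) (hd : 1 ≤ d)
    (hmin : ∀ x : X, Dense (Set.range fun n : ℤ => (T.toEquiv ^ n) x))
    (hdistal : ∀ x y : X, x ≠ y →
      ∃ δ > 0, ∀ n : ℤ, δ ≤ dist ((T.toEquiv ^ n) x) ((T.toEquiv ^ n) y))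
    (u v : (Fin (d + 1) → Bool) → X)
    (hu : u ∈ cubeQ X T (d + 1)) (hv : v ∈ cubeQ X T (d + 1))
    (hagree : ∀ ε : Fin (d + 1) → Bool, ε ≠ vertex0 (d + 1) → u ε = v ε) :
    (u (vertex0 (d + 1)), v (vertex0 (d + 1))) ∈ RP X T d := by
  classical
  set x₀ : X := u (vertex0 (d + 1)) with hx₀
  set Δ : (Fin (d + 2) → Bool) → X := fun _ => x₀ with hΔ
  -- the doubled cube of u (constant in the last direction)
  have hψ₁ : ∀ n : Fin (d + 1) → ℤ, ∃ (n' : Fin (d + 2) → ℤ) (a : ℤ),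
      ∀ ε : Fin (d + 2) → Bool, dotP n (Fin.init ε) = dotP n' ε + a := by
    intro n
    refine ⟨Fin.snoc n 0, 0, fun ε => ?_⟩
    rw [dotP_intsnoc]
    simp
  set U : (Fin (d + 2) → Bool) → X := fun ε => u (Fin.init ε) with hUdef
  have hU : U ∈ cubeQ X T (d + 2) := cubeQ_comp (fun ε => Fin.init ε) hψ₁ hu
  -- the doubled-and-flipped cube of v (depends on the last direction, flipped)
  set ψ₂ : (Fin (d + 2) → Bool) → (Fin (d + 1) → Bool) :=
    fun ε => Fin.snoc (Fin.init (Fin.init ε)) (!(ε (Fin.last (d + 1)))) with hψ₂def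
  have hψ₂ : ∀ n : Fin (d + 1) → ℤ, ∃ (n' : Fin (d + 2) → ℤ) (a : ℤ),
      ∀ ε : Fin (d + 2) → Bool, dotP n (ψ₂ ε) = dotP n' ε + a := by
    intro n
    refine ⟨Fin.snoc (Fin.snoc (Fin.init n) 0) (-(n (Fin.last d))), n (Fin.last d),
      fun ε => ?_⟩
    show dotP n (Fin.snoc (Fin.init (Fin.init ε)) (!(ε (Fin.last (d + 1))))) = _
    rw [dotP_boolsnoc, dotP_intsnoc, dotP_intsnoc]
    cases hε : ε (Fin.last (d + 1)) <;> simp [hε] <;> ring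
  set Y : (Fin (d + 2) → Bool) → X := fun ε => v (ψ₂ ε) with hYdef
  have hY : Y ∈ cubeQ X T (d + 2) := cubeQ_comp ψ₂ hψ₂ hv
  -- enveloping semigroup elements
  obtain ⟨P, hP, hPU⟩ := cubeQ_eq_E_diag hmin x₀ hU
  obtain ⟨Pi, hPi, hPiP, hPPi⟩ := E_inv hdistal hP
  obtain ⟨R, hR, hRY⟩ := cubeQ_eq_E_diag hmin x₀ hY
  set C : (Fin (d + 2) → Bool) → X := Pi Y with hCdef
  have hC : C ∈ cubeQ X T (d + 2) := by
    have : C = (Pi ∘ R) Δ := by rw [hCdef, hRY]; rfl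
    rw [this]
    exact E_diag_mem_cubeQ (E_mul hPi hR)
  -- the "reflection" index map χ
  set χ : (Fin (d + 2) → Bool) → (Fin (d + 2) → Bool) :=
    fun ε => Fin.snoc (Fin.snoc (Fin.init (Fin.init ε)) (!(ε (Fin.last (d + 1)))))
      (ε (Fin.last (d + 1))) with hχdef
  have hχ : ∀ n : Fin (d + 2) → ℤ, ∃ (n' : Fin (d + 2) → ℤ) (a : ℤ),
      ∀ ε : Fin (d + 2) → Bool, dotP n (χ ε) = dotP n' ε + a := by
    intro n
    refine ⟨Fin.snoc (Fin.snoc (Fin.init (Fin.init n)) 0)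
      (n (Fin.last (d + 1)) - (Fin.init n) (Fin.last d)), (Fin.init n) (Fin.last d),
      fun ε => ?_⟩
    show dotP n (Fin.snoc (Fin.snoc (Fin.init (Fin.init ε)) (!(ε (Fin.last (d + 1)))))
      (ε (Fin.last (d + 1)))) = _
    rw [dotP_boolsnoc, dotP_boolsnoc, dotP_intsnoc, dotP_intsnoc]
    cases hε : ε (Fin.last (d + 1)) <;> simp [hε] <;> ring
  set M : (Fin (d + 2) → Bool) → X := fun ε => C (χ ε) with hMdef
  have hM : M ∈ cubeQ X T (d + 2) := cubeQ_comp χ hχ hC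
  obtain ⟨S, hS, hMS⟩ := cubeQ_eq_E_diag hmin x₀ hM
  set W : (Fin (d + 2) → Bool) → X := P M with hWdef
  have hW : W ∈ cubeQ X T (d + 2) := by
    have : W = (P ∘ S) Δ := by rw [hWdef, hMS]; rfl
    rw [this]
    exact E_diag_mem_cubeQ (E_mul hP hS)
  -- extraction of the front face
  set φ₄ : (Fin (d + 1) → Bool) → (Fin (d + 2) → Bool) :=
    fun ε => Fin.snoc (Fin.snoc (Fin.init ε) false) (ε (Fin.last d)) with hφ₄def
  have hφ₄ : ∀ n : Fin (d + 2) → ℤ, ∃ (n' : Fin (d + 1) → ℤ) (a : ℤ),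
      ∀ ε : Fin (d + 1) → Bool, dotP n (φ₄ ε) = dotP n' ε + a := by
    intro n
    refine ⟨Fin.snoc (Fin.init (Fin.init n)) (n (Fin.last (d + 1))), 0, fun ε => ?_⟩
    show dotP n (Fin.snoc (Fin.snoc (Fin.init ε) false) (ε (Fin.last d))) = _
    rw [dotP_boolsnoc, dotP_boolsnoc, dotP_intsnoc]
    cases hε : ε (Fin.last d) <;> simp [hε]
  set w' : (Fin (d + 1) → Bool) → X := fun ε => W (φ₄ ε) with hw'def
  have hw'Q : w' ∈ cubeQ X T (d + 1) := cubeQ_comp φ₄ hφ₄ hW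
  -- key coordinate computations
  have key1 : ∀ ε' : Fin d → Bool,
      w' (Fin.snoc ε' false) = u (Fin.snoc ε' false) := by
    intro ε'
    have hi₀ : φ₄ (Fin.snoc ε' false) = Fin.snoc (Fin.snoc ε' false) false := by
      rw [hφ₄def]; simp
    set i₀ : Fin (d + 2) → Bool := Fin.snoc (Fin.snoc ε' false) false with hi₀def
    have hj₀ : χ i₀ = Fin.snoc (Fin.snoc ε' true) false := by
      rw [hχdef, hi₀def]; simp
    set j₀ : Fin (d + 2) → Bool := Fin.snoc (Fin.snoc ε' true) false with hj₀def
    -- Y and P Δ agree at j₀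
    have hne : Fin.snoc ε' true ≠ vertex0 (d + 1) := by
      intro h
      have := congrFun h (Fin.last d)
      simp [vertex0] at this
    have hYj : Y j₀ = (P Δ) j₀ := by
      have h1 : Y j₀ = v (Fin.snoc ε' true) := by
        rw [hYdef, hψ₂def, hj₀def]; simp
      have h2 : (P Δ) j₀ = u (Fin.snoc ε' true) := by
        rw [← hPU, hUdef, hj₀def]; simp
      rw [h1, h2, hagree _ hne]
    have hCj : C j₀ = x₀ := by
      have h1 : C j₀ = Pi (P Δ) j₀ := E_coord hPi hYj
      have h2 : Pi (P Δ) = Δ := congrFun hPiP Δ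
      rw [h1, h2]
    have hMi : M i₀ = Δ i₀ := by
      rw [hMdef]
      show C (χ i₀) = Δ i₀
      rw [hj₀, hCj]
    have hWi : W i₀ = u (Fin.snoc ε' false) := by
      have h1 : W i₀ = (P Δ) i₀ := E_coord hP hMi
      rw [h1, ← hPU, hUdef, hi₀def]
      simp
    rw [hw'def]
    show W (φ₄ (Fin.snoc ε' false)) = _
    rw [hi₀]
    exact hWi
  have key2 : ∀ ε' : Fin d → Bool,
      w' (Fin.snoc ε' true) = v (Fin.snoc ε' false) := by
    intro ε'
    have hi₁ : φ₄ (Fin.snoc ε' true) = Fin.snoc (Fin.snoc ε' false) true := by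
      rw [hφ₄def]; simp
    set i₁ : Fin (d + 2) → Bool := Fin.snoc (Fin.snoc ε' false) true with hi₁def
    have hχi₁ : χ i₁ = i₁ := by
      rw [hχdef, hi₁def]; simp
    have hMi : M i₁ = (Pi Y) i₁ := by
      rw [hMdef]
      show C (χ i₁) = (Pi Y) i₁
      rw [hχi₁, hCdef]
    have hWi : W i₁ = Y i₁ := by
      have h1 : W i₁ = (P (Pi Y)) i₁ := E_coord hP hMi
      have h2 : P (Pi Y) = Y := congrFun hPPi Y
      rw [h1, h2]
    have hYi : Y i₁ = v (Fin.snoc ε' false) := by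
      rw [hYdef, hψ₂def, hi₁def]; simp
    rw [hw'def]
    show W (φ₄ (Fin.snoc ε' true)) = _
    rw [hi₁]
    rw [hWi, hYi]
  have hv0 : vertex0 (d + 1) = Fin.snoc (vertex0 d) false := by
    funext i
    refine Fin.lastCases ?_ ?_ i <;> simp [vertex0]
  -- final δ-argument
  simp only [RP, Set.mem_setOf_eq]
  intro δ hδ
  have hw'cl : w' ∈ closure {y : (Fin (d + 1) → Bool) → X |
      ∃ (x : X) (n : Fin (d + 1) → ℤ), y = fun ε => (T.toEquiv ^ dotP n ε) x} := hw'Q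
  obtain ⟨b, ⟨x, n, rfl⟩, hdist⟩ := Metric.mem_closure_iff.1 hw'cl (δ / 2) (by positivity)
  have hco : ∀ ε : Fin (d + 1) → Bool,
      dist (w' ε) ((T.toEquiv ^ dotP n ε) x) < δ / 2 := by
    intro ε
    exact (dist_pi_lt_iff (by positivity)).1 hdist ε
  refine ⟨x, (T.toEquiv ^ (n (Fin.last d))) x, Fin.init n, ?_, ?_, ?_⟩
  · have h1 := hco (vertex0 (d + 1))
    have h2 : dotP n (vertex0 (d + 1)) = 0 := dotP_vertex0 n
    have h3 : w' (vertex0 (d + 1)) = u (vertex0 (d + 1)) := by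
      rw [hv0]; exact key1 (vertex0 d)
    rw [h2, h3] at h1
    simp only [zpow_zero, Equiv.Perm.coe_one, id_eq] at h1
    calc dist (u (vertex0 (d + 1))) x < δ / 2 := h1
      _ ≤ δ := by linarith
  · have h1 := hco (Fin.snoc (vertex0 d) true)
    have h2 : dotP n (Fin.snoc (vertex0 d) true) = n (Fin.last d) := by
      rw [dotP_boolsnoc, dotP_vertex0]; simp
    have h3 : w' (Fin.snoc (vertex0 d) true) = v (vertex0 (d + 1)) := by
      rw [key2 (vertex0 d), ← hv0]
    rw [h2, h3] at h1
    calc dist (v (vertex0 (d + 1))) ((T.toEquiv ^ n (Fin.last d)) x) < δ / 2 := h1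
      _ ≤ δ := by linarith
  · intro ε' hne'
    have hA := hco (Fin.snoc ε' false)
    have hB := hco (Fin.snoc ε' true)
    have hdA : dotP n (Fin.snoc ε' false) = dotP (Fin.init n) ε' := by
      rw [dotP_boolsnoc]; simp
    have hdB : dotP n (Fin.snoc ε' true) = dotP (Fin.init n) ε' + n (Fin.last d) := by
      rw [dotP_boolsnoc]; simp
    have hnef : Fin.snoc ε' false ≠ vertex0 (d + 1) := by
      intro h
      obtain ⟨i, hi⟩ := Function.ne_iff.1 hne'
      have := congrFun h i.castSucc
      simp [vertex0] at this
      exact hi (by simpa [vertex0] using this)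
    have hval : u (Fin.snoc ε' false) = v (Fin.snoc ε' false) := hagree _ hnef
    rw [hdA, key1 ε', hval] at hA
    rw [hdB, key2 ε'] at hB
    have hcomp : (T.toEquiv ^ dotP (Fin.init n) ε') ((T.toEquiv ^ n (Fin.last d)) x)
        = (T.toEquiv ^ (dotP (Fin.init n) ε' + n (Fin.last d))) x :=
      (pow_add_apply T _ _ _).symm
    rw [hcomp]
    have tri := dist_triangle ((T.toEquiv ^ dotP (Fin.init n) ε') x) (v (Fin.snoc ε' false))
      ((T.toEquiv ^ (dotP (Fin.init n) ε' + n (Fin.last d))) x)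
    have c1 : dist ((T.toEquiv ^ dotP (Fin.init n) ε') x) (v (Fin.snoc ε' false))
        = dist (v (Fin.snoc ε' false)) ((T.toEquiv ^ dotP (Fin.init n) ε') x) :=
      dist_comm _ _
    linarith
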